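/- Let k ∈ ℕ, λ ≥ 0, ρ > 0, A > 0, and let Ω : ℝ^k → ℝ be convex and nonnegative. For a symmetric matrix G ∈ ℝ^{k×k} and β ∈ ℝ^k define ℓ(α; G, β) = (1/2)αᵀGα − αᵀβ + λΩ(α). Let G and G' be symmetric matrices with G ⪰ ρI and G' ⪰ ρI, and let β, β' ∈ ℝ^k. Suppose α is a minimizer of ℓ(·; G, β) over ℝ^k and α' is a minimizer of ℓ(·; G', β') over ℝ^k, with ‖α‖₂ ≤ A and ‖α'‖₂ ≤ A. Then ‖α − α'‖₂ ≤ (A/ρ)·‖G − G'‖_F + (1/ρ)·‖β − β'‖₂, where ‖·‖_F denotes the Frobenius norm. -/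

import Mathlib

namespace CodeLip

variable {k : ℕ}

noncomputable def qB (M : Matrix (Fin k) (Fin k) ℝ) (x y : EuclideanSpace ℝ (Fin k)) : ℝ :=
  ∑ i, ∑ j, x i * M i j * y j

lemma qB_comm (M : Matrix (Fin k) (Fin k) ℝ) (hM : M.IsSymm)
    (x y : EuclideanSpace ℝ (Fin k)) : qB M x y = qB M y x := by
  unfold qB
  rw [Finset.sum_comm]
  refine Finset.sum_congr rfl fun i _ => Finset.sum_congr rfl fun j _ => ?_
  rw [hM.apply i j]; ring

lemma qB_add_left (M : Matrix (Fin k) (Fin k) ℝ) (x y z : EuclideanSpace ℝ (Fin k)) :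
    qB M (x + y) z = qB M x z + qB M y z := by
  unfold qB
  simp [PiLp.add_apply, add_mul, Finset.sum_add_distrib]

lemma qB_add_right (M : Matrix (Fin k) (Fin k) ℝ) (x y z : EuclideanSpace ℝ (Fin k)) :
    qB M x (y + z) = qB M x y + qB M x z := by
  unfold qB
  simp [PiLp.add_apply, mul_add, Finset.sum_add_distrib]

lemma qB_smul_left (M : Matrix (Fin k) (Fin k) ℝ) (t : ℝ) (x z : EuclideanSpace ℝ (Fin k)) :
    qB M (t • x) z = t * qB M x z := by
  unfold qB
  simp [PiLp.smul_apply, smul_eq_mul, Finset.mul_sum, mul_assoc]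

lemma qB_smul_right (M : Matrix (Fin k) (Fin k) ℝ) (t : ℝ) (x z : EuclideanSpace ℝ (Fin k)) :
    qB M x (t • z) = t * qB M x z := by
  unfold qB
  simp only [PiLp.smul_apply, smul_eq_mul, Finset.mul_sum]
  exact Finset.sum_congr rfl fun i _ => Finset.sum_congr rfl fun j _ => by ring

lemma qB_sub_left (M : Matrix (Fin k) (Fin k) ℝ) (x y z : EuclideanSpace ℝ (Fin k)) :
    qB M (x - y) z = qB M x z - qB M y z := by
  have := qB_add_left M (x - y) y z
  simp only [sub_add_cancel] at this
  linarith

lemma qB_sub_right (M : Matrix (Fin k) (Fin k) ℝ) (x y z : EuclideanSpace ℝ (Fin k)) :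
    qB M x (y - z) = qB M x y - qB M x z := by
  have := qB_add_right M x (y - z) z
  simp only [sub_add_cancel] at this
  linarith

lemma qB_sub_matrix (M M' : Matrix (Fin k) (Fin k) ℝ) (x y : EuclideanSpace ℝ (Fin k)) :
    qB (M - M') x y = qB M x y - qB M' x y := by
  unfold qB
  simp [Matrix.sub_apply, mul_sub, sub_mul, Finset.sum_sub_distrib]

lemma norm_sq_eq (x : EuclideanSpace ℝ (Fin k)) : ‖x‖ ^ 2 = ∑ i, x i ^ 2 := by
  rw [EuclideanSpace.norm_eq, Real.sq_sqrt (by positivity)]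
  exact Finset.sum_congr rfl fun i _ => by rw [Real.norm_eq_abs, sq_abs]

lemma linCS (x y : EuclideanSpace ℝ (Fin k)) : |∑ i, x i * y i| ≤ ‖x‖ * ‖y‖ := by
  refine abs_le_of_sq_le_sq ?_ (by positivity)
  calc (∑ i, x i * y i) ^ 2 ≤ (∑ i, x i ^ 2) * ∑ i, y i ^ 2 :=
        Finset.sum_mul_sq_le_sq_mul_sq Finset.univ _ _
    _ = (‖x‖ * ‖y‖) ^ 2 := by rw [mul_pow, norm_sq_eq, norm_sq_eq]

lemma qB_CS (M : Matrix (Fin k) (Fin k) ℝ) (x y : EuclideanSpace ℝ (Fin k)) :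
    |qB M x y| ≤ Real.sqrt (∑ i, ∑ j, M i j ^ 2) * (‖x‖ * ‖y‖) := by
  set u : EuclideanSpace ℝ (Fin k) := WithLp.toLp 2 (fun i => ∑ j, M i j * y j) with hu
  have h1 : qB M x y = ∑ i, x i * u i := by
    refine Finset.sum_congr rfl fun i _ => ?_
    simp only [hu, WithLp.ofLp_toLp]; rw [Finset.mul_sum]
    exact Finset.sum_congr rfl fun j _ => by ring
  have h2 : ‖u‖ ≤ Real.sqrt (∑ i, ∑ j, M i j ^ 2) * ‖y‖ := by
    have hsq : ‖u‖ ^ 2 ≤ (∑ i, ∑ j, M i j ^ 2) * ‖y‖ ^ 2 := by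
      rw [norm_sq_eq, norm_sq_eq, Finset.sum_mul]
      refine Finset.sum_le_sum fun i _ => ?_
      exact Finset.sum_mul_sq_le_sq_mul_sq Finset.univ (fun j => M i j) (fun j => y j)
    have h3 : ‖u‖ ^ 2 ≤ (Real.sqrt (∑ i, ∑ j, M i j ^ 2) * ‖y‖) ^ 2 := by
      rw [mul_pow, Real.sq_sqrt (by positivity)]; exact hsq
    have := abs_le_of_sq_le_sq h3 (by positivity)
    rwa [abs_norm] at this
  calc |qB M x y| = |∑ i, x i * u i| := by rw [h1]
    _ ≤ ‖x‖ * ‖u‖ := linCS x u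
    _ ≤ ‖x‖ * (Real.sqrt (∑ i, ∑ j, M i j ^ 2) * ‖y‖) :=
        mul_le_mul_of_nonneg_left h2 (norm_nonneg x)
    _ = Real.sqrt (∑ i, ∑ j, M i j ^ 2) * (‖x‖ * ‖y‖) := by ring

lemma strong_min (lam ρ : ℝ) (hlam : 0 ≤ lam) (hρ : 0 < ρ)
    (Om : EuclideanSpace ℝ (Fin k) → ℝ) (hOmconv : ConvexOn ℝ Set.univ Om)
    (G : Matrix (Fin k) (Fin k) ℝ) (hGsymm : G.IsSymm)
    (hG : ∀ x : EuclideanSpace ℝ (Fin k), ρ * ‖x‖ ^ 2 ≤ qB G x x)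
    (β a : EuclideanSpace ℝ (Fin k))
    (ha : ∀ b : EuclideanSpace ℝ (Fin k),
      (1 / 2) * qB G a a - (∑ i, a i * β i) + lam * Om a ≤
      (1 / 2) * qB G b b - (∑ i, b i * β i) + lam * Om b)
    (b : EuclideanSpace ℝ (Fin k)) :
    (1 / 2) * qB G a a - (∑ i, a i * β i) + lam * Om a + ρ / 2 * ‖b - a‖ ^ 2 ≤
      (1 / 2) * qB G b b - (∑ i, b i * β i) + lam * Om b := by
  set Fa : ℝ := (1 / 2) * qB G a a - (∑ i, a i * β i) + lam * Om a with hFa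
  set Fb : ℝ := (1 / 2) * qB G b b - (∑ i, b i * β i) + lam * Om b with hFb
  set Q : ℝ := qB G (b - a) (b - a) with hQdef
  set N : ℝ := ‖b - a‖ ^ 2 with hN
  have hNnn : 0 ≤ N := by positivity
  have hQ : ρ * N ≤ Q := hG (b - a)
  clear_value Fa Fb Q N
  have key : ∀ t : ℝ, 0 < t → t < 1 → Fa + (1 - t) * (ρ / 2) * N ≤ Fb := by
    intro t ht ht1
    set c : EuclideanSpace ℝ (Fin k) := (1 - t) • a + t • b with hc
    have hab : qB G a b = qB G b a := qB_comm G hGsymm a b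
    have e1 : qB G c c = (1 - t) ^ 2 * qB G a a + 2 * ((1 - t) * t) * qB G a b
        + t ^ 2 * qB G b b := by
      rw [hc]
      simp only [qB_add_left, qB_add_right, qB_smul_left, qB_smul_right, hab]
      ring
    have e2 : Q = qB G b b - 2 * qB G a b + qB G a a := by
      rw [hQdef, qB_sub_left, qB_sub_right, qB_sub_right, hab]; ring
    have e4 : qB G c c = (1 - t) * qB G a a + t * qB G b b - (t * (1 - t)) * Q := by
      rw [e1, e2]; ring
    have e3 : (∑ i, c i * β i) = (1 - t) * (∑ i, a i * β i) + t * (∑ i, b i * β i) := by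
      rw [hc, Finset.mul_sum, Finset.mul_sum, ← Finset.sum_add_distrib]
      refine Finset.sum_congr rfl fun i _ => ?_
      simp only [PiLp.add_apply, PiLp.smul_apply, smul_eq_mul]
      ring
    have eOm : Om c ≤ (1 - t) * Om a + t * Om b := by
      have := hOmconv.2 (Set.mem_univ a) (Set.mem_univ b)
        (by linarith : (0:ℝ) ≤ 1 - t) (le_of_lt ht) (by ring)
      simpa [hc, smul_eq_mul] using this
    have hmin := ha c
    rw [hFa] at hmin
    have hOm' : lam * Om c ≤ lam * ((1 - t) * Om a + t * Om b) :=
      mul_le_mul_of_nonneg_left eOm hlam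
    have h5 : Fa ≤ (1 - t) * Fa + t * Fb - (t * (1 - t) / 2) * Q := by
      rw [hFa, hFb]
      calc (1 / 2) * qB G a a - (∑ i, a i * β i) + lam * Om a
          ≤ (1 / 2) * qB G c c - (∑ i, c i * β i) + lam * Om c := hmin
        _ ≤ (1 / 2) * qB G c c - (∑ i, c i * β i)
            + lam * ((1 - t) * Om a + t * Om b) := by linarith
        _ = (1 - t) * ((1 / 2) * qB G a a - (∑ i, a i * β i) + lam * Om a)
            + t * ((1 / 2) * qB G b b - (∑ i, b i * β i) + lam * Om b)
            - (t * (1 - t) / 2) * Q := by rw [e4, e3]; ring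
    have h6 : t * (Fa + ((1 - t) / 2) * Q) ≤ t * Fb := by nlinarith
    have h7 : Fa + ((1 - t) / 2) * Q ≤ Fb := le_of_mul_le_mul_left h6 ht
    have h8 : (1 - t) * (ρ / 2) * N ≤ ((1 - t) / 2) * Q := by
      have h9 : ((1 - t) / 2) * (ρ * N) ≤ ((1 - t) / 2) * Q :=
        mul_le_mul_of_nonneg_left hQ (by linarith)
      nlinarith
    linarith
  -- pass to the limit t → 0
  refine le_of_forall_pos_le_add fun ε hε => ?_
  set t : ℝ := min (1 / 2) (ε / (ρ / 2 * N + 1)) with htdef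
  have hden : 0 < ρ / 2 * N + 1 := by positivity
  have ht0 : 0 < t := lt_min (by norm_num) (div_pos hε hden)
  have ht1 : t < 1 := lt_of_le_of_lt (min_le_left _ _) (by norm_num)
  have hk := key t ht0 ht1
  have htle : t ≤ ε / (ρ / 2 * N + 1) := min_le_right _ _
  have hsmall : t * (ρ / 2 * N) ≤ ε := by
    have : t * (ρ / 2 * N + 1) ≤ ε := by
      calc t * (ρ / 2 * N + 1) ≤ (ε / (ρ / 2 * N + 1)) * (ρ / 2 * N + 1) :=
            mul_le_mul_of_nonneg_right htle (le_of_lt hden)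
        _ = ε := by field_simp
    nlinarith
  nlinarith

end CodeLip


open CodeLip in
/-- Lipschitz continuity of the minimizer of `α ↦ (1/2)αᵀGα − αᵀβ + λΩ(α)` in the
parameters `(G, β)`: `‖α − α'‖ ≤ (A/ρ)‖G − G'‖_F + (1/ρ)‖β − β'‖`. -/
theorem code_lipschitz_in_parameters
    {k : ℕ} (lam ρ A : ℝ) (hlam : 0 ≤ lam) (hρ : 0 < ρ) (hA : 0 < A)
    (Om : EuclideanSpace ℝ (Fin k) → ℝ)
    (hOmconv : ConvexOn ℝ Set.univ Om) (hOmpos : ∀ a, 0 ≤ Om a)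
    (G G' : Matrix (Fin k) (Fin k) ℝ) (hGsymm : G.IsSymm) (hG'symm : G'.IsSymm)
    (hG : ∀ a : EuclideanSpace ℝ (Fin k), ρ * ‖a‖ ^ 2 ≤ ∑ i, ∑ j, a i * G i j * a j)
    (hG' : ∀ a : EuclideanSpace ℝ (Fin k), ρ * ‖a‖ ^ 2 ≤ ∑ i, ∑ j, a i * G' i j * a j)
    (β β' : EuclideanSpace ℝ (Fin k)) (a a' : EuclideanSpace ℝ (Fin k))
    (ha : ∀ b : EuclideanSpace ℝ (Fin k),
      (1 / 2) * (∑ i, ∑ j, a i * G i j * a j) - (∑ i, a i * β i) + lam * Om a ≤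
      (1 / 2) * (∑ i, ∑ j, b i * G i j * b j) - (∑ i, b i * β i) + lam * Om b)
    (ha' : ∀ b : EuclideanSpace ℝ (Fin k),
      (1 / 2) * (∑ i, ∑ j, a' i * G' i j * a' j) - (∑ i, a' i * β' i) + lam * Om a' ≤
      (1 / 2) * (∑ i, ∑ j, b i * G' i j * b j) - (∑ i, b i * β' i) + lam * Om b)
    (hnorm : ‖a‖ ≤ A) (hnorm' : ‖a'‖ ≤ A) :
    ‖a - a'‖ ≤
      A / ρ * Real.sqrt (∑ i, ∑ j, (G i j - G' i j) ^ 2) + (1 / ρ) * ‖β - β'‖ := by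
  set D : Matrix (Fin k) (Fin k) ℝ := G - G' with hD
  have hDsymm : D.IsSymm := hGsymm.sub hG'symm
  set S : ℝ := Real.sqrt (∑ i, ∑ j, (G i j - G' i j) ^ 2) with hS
  have hSD : S = Real.sqrt (∑ i, ∑ j, D i j ^ 2) := by
    simp only [hS, hD, Matrix.sub_apply]
  have hSnn : 0 ≤ S := hS ▸ Real.sqrt_nonneg _
  set d : ℝ := ‖a - a'‖ with hd
  have hdnn : 0 ≤ d := norm_nonneg _
  -- strong convexity at the two minimizers
  have h1 := strong_min lam ρ hlam hρ Om hOmconv G hGsymm hG β a ha a'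
  have h2 := strong_min lam ρ hlam hρ Om hOmconv G' hG'symm hG' β' a' ha' a
  rw [norm_sub_rev a' a, ← hd] at h1
  rw [← hd] at h2
  -- combine
  have hsplit : qB D a' a' - qB D a a = qB D (a' - a) (a' + a) := by
    rw [qB_sub_left, qB_add_right, qB_add_right, qB_comm D hDsymm a a']
    ring
  have hlin : (∑ i, a i * β i) - (∑ i, a' i * β i) - (∑ i, a i * β' i)
      + (∑ i, a' i * β' i) = ∑ i, (a - a') i * (β - β') i := by
    rw [← Finset.sum_sub_distrib, ← Finset.sum_sub_distrib, ← Finset.sum_add_distrib]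
    refine Finset.sum_congr rfl fun i _ => ?_
    simp only [PiLp.sub_apply]
    ring
  have hsum : ρ * d ^ 2 ≤ (1 / 2) * qB D (a' - a) (a' + a)
      + ∑ i, (a - a') i * (β - β') i := by
    have e1 : qB D a' a' = qB G a' a' - qB G' a' a' := by rw [hD, qB_sub_matrix]
    have e2 : qB D a a = qB G a a - qB G' a a := by rw [hD, qB_sub_matrix]
    have := hsplit
    rw [e1, e2] at this
    rw [← this, ← hlin]
    have hq1 : (1/2) * qB G a a - (∑ i, a i * β i) + lam * Om a + ρ/2 * d^2 ≤
        (1/2) * qB G a' a' - (∑ i, a' i * β i) + lam * Om a' := h1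
    have hq2 : (1/2) * qB G' a' a' - (∑ i, a' i * β' i) + lam * Om a' + ρ/2 * d^2 ≤
        (1/2) * qB G' a a - (∑ i, a i * β' i) + lam * Om a := h2
    linarith
  -- bound the right-hand side
  have hB1 : |qB D (a' - a) (a' + a)| ≤ Real.sqrt (∑ i, ∑ j, D i j ^ 2) * (d * (2 * A)) := by
    have := qB_CS D (a' - a) (a' + a)
    have hn1 : ‖a' - a‖ = d := by rw [hd, norm_sub_rev]
    have hn2 : ‖a' + a‖ ≤ 2 * A := by
      calc ‖a' + a‖ ≤ ‖a'‖ + ‖a‖ := norm_add_le _ _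
        _ ≤ 2 * A := by linarith
    calc |qB D (a' - a) (a' + a)| ≤ Real.sqrt (∑ i, ∑ j, D i j ^ 2) * (‖a' - a‖ * ‖a' + a‖) :=
          this
      _ ≤ Real.sqrt (∑ i, ∑ j, D i j ^ 2) * (d * (2 * A)) := by
          rw [hn1]
          exact mul_le_mul_of_nonneg_left
            (mul_le_mul_of_nonneg_left hn2 hdnn) (Real.sqrt_nonneg _)
  have hB2 : |∑ i, (a - a') i * (β - β') i| ≤ d * ‖β - β'‖ := linCS (a - a') (β - β')
  rw [← hSD] at hB1
  have hmain : ρ * d ^ 2 ≤ d * (A * S + ‖β - β'‖) := by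
    have := abs_le.mp hB1
    have := abs_le.mp hB2
    nlinarith [abs_le.mp hB1, abs_le.mp hB2]
  -- conclude
  rcases eq_or_lt_of_le hdnn with hd0 | hd0
  · rw [← hd0]
    exact add_nonneg (mul_nonneg (div_nonneg hA.le hρ.le) hSnn)
      (mul_nonneg (by positivity) (norm_nonneg _))
  · have hdle : ρ * d ≤ A * S + ‖β - β'‖ := by
      have := (mul_le_mul_iff_of_pos_right hd0).mpr (le_refl d)
      nlinarith
    have : d ≤ (A * S + ‖β - β'‖) / ρ := by
      rw [le_div_iff₀ hρ]; linarith
    calc d ≤ (A * S + ‖β - β'‖) / ρ := this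
      _ = A / ρ * S + 1 / ρ * ‖β - β'‖ := by field_simp
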